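/- Let n ≥ 2 be an integer, P > 0, and 0 = Δ_0 < Δ_1 < … < Δ_{n−1} < Δ_n = P real numbers. Set x_i := sinh(Δ_i/2)/sinh((P−Δ_i)/2) for i = 1, …, n−1 and δ_i := Δ_i − Δ_{i−1} for i = 1, …, n. Then ∏_{i=1}^{n−1} [ (1/2)·sinh(P/2)/sinh((P−Δ_i)/2)² ] = ( x_1 · ∏_{i=2}^{n−1} (x_i − x_{i−1}) ) · sinh(P/2) / ( 2^{n−1} · ∏_{i=1}^{n} sinh(δ_i/2) ). -/

import Mathlib

/-- The Jacobian of the change of variables `x_i ↦ Δ_i` on the fool's crown: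
the Weil–Petersson volume density transforms into
`sinh(P/2) / (2^{n-1} ∏ sinh(δ_i/2))`. -/
theorem stmt_7 (n : ℕ) (hn : 2 ≤ n) (P : ℝ) (hP : 0 < P) (Δ x δ : ℕ → ℝ)
    (hΔ0 : Δ 0 = 0) (hΔn : Δ n = P)
    (hΔ : ∀ i, i < n → Δ i < Δ (i + 1))
    (hx : ∀ i, 1 ≤ i → i ≤ n - 1 →
      x i = Real.sinh (Δ i / 2) / Real.sinh ((P - Δ i) / 2))
    (hδ : ∀ i, 1 ≤ i → i ≤ n → δ i = Δ i - Δ (i - 1)) :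
    ∏ i ∈ Finset.Icc 1 (n - 1),
        (1 / 2 * Real.sinh (P / 2) / (Real.sinh ((P - Δ i) / 2)) ^ 2) =
      (x 1 * ∏ i ∈ Finset.Icc 2 (n - 1), (x i - x (i - 1))) * Real.sinh (P / 2) /
        (2 ^ (n - 1) * ∏ i ∈ Finset.Icc 1 n, Real.sinh (δ i / 2)) := by
  have hhpos : 0 < Real.sinh (P / 2) := Real.sinh_pos_iff.2 (by positivity)
  set h := Real.sinh (P / 2) with hh
  -- monotonicity of Δ
  have hmono : ∀ j, j ≤ n → ∀ i, i < j → Δ i < Δ j := by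
    intro j
    induction j with
    | zero => intro _ i hi; omega
    | succ k ih =>
      intro hk i hi
      have hk' : Δ k < Δ (k + 1) := hΔ k (by omega)
      rcases Nat.lt_succ_iff_lt_or_eq.mp hi with h' | h'
      · exact lt_trans (ih (by omega) i h') hk'
      · subst h'; exact hk'
  have hΔltP : ∀ i, i < n → Δ i < P := fun i hi => hΔn ▸ hmono n le_rfl i hi
  have hs : ∀ i ∈ Finset.Icc 1 (n - 1), 0 < Real.sinh ((P - Δ i) / 2) := by
    intro i hi
    simp only [Finset.mem_Icc] at hi
    have := hΔltP i (by omega)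
    exact Real.sinh_pos_iff.2 (by linarith)
  have hd : ∀ i ∈ Finset.Icc 1 n, 0 < Real.sinh (δ i / 2) := by
    intro i hi
    simp only [Finset.mem_Icc] at hi
    rw [hδ i hi.1 hi.2]
    have h1 : Δ (i - 1) < Δ i := by
      have := hΔ (i - 1) (by omega)
      have h2 : i - 1 + 1 = i := by omega
      rwa [h2] at this
    exact Real.sinh_pos_iff.2 (by linarith)
  -- key pointwise identity
  have key : ∀ i ∈ Finset.Icc 2 (n - 1), x i - x (i - 1)
      = h * Real.sinh (δ i / 2) /
        (Real.sinh ((P - Δ i) / 2) * Real.sinh ((P - Δ (i - 1)) / 2)) := by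
    intro i hi
    simp only [Finset.mem_Icc] at hi
    have hsi : 0 < Real.sinh ((P - Δ i) / 2) :=
      hs i (Finset.mem_Icc.2 ⟨by omega, by omega⟩)
    have hsi' : 0 < Real.sinh ((P - Δ (i - 1)) / 2) :=
      hs (i - 1) (Finset.mem_Icc.2 ⟨by omega, by omega⟩)
    rw [hx i (by omega) hi.2, hx (i - 1) (by omega) (by omega),
      hδ i (by omega) (by omega)]
    rw [div_sub_div _ _ (ne_of_gt hsi) (ne_of_gt hsi')]
    rw [div_eq_div_iff (by positivity) (by positivity)]
    have e1 : (P - Δ i) / 2 = P / 2 - Δ i / 2 := by ring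
    have e2 : (P - Δ (i - 1)) / 2 = P / 2 - Δ (i - 1) / 2 := by ring
    have e3 : (Δ i - Δ (i - 1)) / 2 = Δ i / 2 - Δ (i - 1) / 2 := by ring
    rw [e1, e2, e3, hh, Real.sinh_sub, Real.sinh_sub, Real.sinh_sub]
    ring
  -- rewrite the middle product
  rw [Finset.prod_congr rfl key]
  -- names for the pieces
  set s : ℕ → ℝ := fun i => Real.sinh ((P - Δ i) / 2) with hsdef
  set d : ℕ → ℝ := fun i => Real.sinh (δ i / 2) with hddef
  -- reindex lemma
  have reidx : ∏ i ∈ Finset.Icc 2 (n - 1), s (i - 1)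
      = ∏ i ∈ Finset.Icc 1 (n - 2), s i := by
    have hmap : Finset.Icc 2 (n - 1) = (Finset.Icc 1 (n - 2)).map (addRightEmbedding 1) := by
      rw [Finset.map_add_right_Icc]
      congr 1 <;> omega
    rw [hmap, Finset.prod_map]
    exact Finset.prod_congr rfl fun j _ => by simp [addRightEmbedding]
  -- split products
  have hsplit1 : ∏ i ∈ Finset.Icc 1 (n - 1), s i
      = s 1 * ∏ i ∈ Finset.Icc 2 (n - 1), s i := by
    rw [Finset.Icc_eq_cons_Ioc (by omega : 1 ≤ n - 1), Finset.prod_cons,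
      ← Finset.Icc_add_one_left_eq_Ioc]
    rfl
  have hsplit2 : ∏ i ∈ Finset.Icc 1 (n - 1), s i
      = (∏ i ∈ Finset.Icc 1 (n - 2), s i) * s (n - 1) := by
    have e : n - 1 = (n - 2) + 1 := by omega
    rw [e, Finset.prod_Icc_succ_top (by omega)]
  have hsplit3 : ∏ i ∈ Finset.Icc 1 n, d i
      = d 1 * (∏ i ∈ Finset.Icc 2 (n - 1), d i) * d n := by
    have e : n = (n - 1) + 1 := by omega
    rw [e, Finset.prod_Icc_succ_top (by omega), ← e,
      Finset.Icc_eq_cons_Ioc (by omega : 1 ≤ n - 1), Finset.prod_cons,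
      ← Finset.Icc_add_one_left_eq_Ioc]
    rfl
  have hdn : d n = s (n - 1) := by
    simp only [hddef, hsdef]
    rw [hδ n (by omega) le_rfl, hΔn]
  have hx1 : x 1 = d 1 / s 1 := by
    rw [hx 1 le_rfl (by omega)]
    simp only [hddef, hsdef]
    rw [hδ 1 le_rfl (by omega)]
    norm_num [hΔ0]
  -- product of quotients
  have hBprod : ∏ i ∈ Finset.Icc 2 (n - 1), (h * d i / (s i * s (i - 1)))
      = h ^ (n - 2) * (∏ i ∈ Finset.Icc 2 (n - 1), d i) /
        ((∏ i ∈ Finset.Icc 2 (n - 1), s i) * ∏ i ∈ Finset.Icc 1 (n - 2), s i) := by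
    rw [Finset.prod_div_distrib, Finset.prod_mul_distrib, Finset.prod_mul_distrib,
      Finset.prod_const, Nat.card_Icc, reidx, show n - 1 + 1 - 2 = n - 2 from by omega]
  -- LHS as a single quotient
  have hLHS : ∏ i ∈ Finset.Icc 1 (n - 1), (1 / 2 * h / (s i) ^ 2)
      = (1 / 2 * h) ^ (n - 1) / (∏ i ∈ Finset.Icc 1 (n - 1), s i) ^ 2 := by
    rw [Finset.prod_div_distrib, Finset.prod_const, Finset.prod_pow, Nat.card_Icc,
      show n - 1 + 1 - 1 = n - 1 from by omega]
  rw [hBprod, hLHS, hsplit3, hdn, hx1, hsplit1]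
  -- positivity of the pieces
  have hs1 : s 1 ≠ 0 := ne_of_gt (hs 1 (Finset.mem_Icc.2 ⟨le_rfl, by omega⟩))
  have hsn : s (n - 1) ≠ 0 := ne_of_gt (hs (n - 1) (Finset.mem_Icc.2 ⟨by omega, le_rfl⟩))
  have hSb : (∏ i ∈ Finset.Icc 2 (n - 1), s i) ≠ 0 :=
    ne_of_gt (Finset.prod_pos fun i hi => by
      refine hs i (Finset.mem_Icc.2 ?_)
      simp only [Finset.mem_Icc] at hi; omega)
  have hSc : (∏ i ∈ Finset.Icc 1 (n - 2), s i) ≠ 0 :=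
    ne_of_gt (Finset.prod_pos fun i hi => by
      refine hs i (Finset.mem_Icc.2 ?_)
      simp only [Finset.mem_Icc] at hi; omega)
  have hd1 : d 1 ≠ 0 := ne_of_gt (hd 1 (Finset.mem_Icc.2 ⟨le_rfl, by omega⟩))
  have hDb : (∏ i ∈ Finset.Icc 2 (n - 1), d i) ≠ 0 :=
    ne_of_gt (Finset.prod_pos fun i hi => by
      refine hd i (Finset.mem_Icc.2 ?_)
      simp only [Finset.mem_Icc] at hi; omega)
  have hne : h ≠ 0 := ne_of_gt hhpos
  have hrel : s 1 * ∏ i ∈ Finset.Icc 2 (n - 1), s i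
      = (∏ i ∈ Finset.Icc 1 (n - 2), s i) * s (n - 1) := by
    rw [← hsplit1, hsplit2]
  clear_value h
  clear hsplit1 hsplit2 hsplit3 hdn hx1 hBprod hLHS key hs hd hmono hΔltP hh
  revert hrel hs1 hsn hSb hSc hd1 hDb
  generalize s 1 = a
  generalize s (n - 1) = b
  generalize d 1 = c
  generalize (∏ i ∈ Finset.Icc 2 (n - 1), s i) = Sb
  generalize (∏ i ∈ Finset.Icc 1 (n - 2), s i) = Sc
  generalize (∏ i ∈ Finset.Icc 2 (n - 1), d i) = Db
  intro hs1 hsn hSb hSc hd1 hDb hrel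
  have hk : n - 1 = (n - 2) + 1 := by omega
  rw [hk]
  have epow : (1 / 2 * h) ^ (n - 2 + 1) = h ^ (n - 2 + 1) / 2 ^ (n - 2 + 1) := by
    rw [show (1:ℝ)/2*h = h/2 by ring, div_pow]
  rw [epow]
  field_simp
  linear_combination (-(h ^ (n - 2 + 1))) * hrel
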